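/- There exists a universal constant $C > 0$ such that for all natural numbers $j \ge 1$ and all $l$ with $0 \le l \le j-1$, one has $(j-l+1)^{1/2}\,\min\{l+1, j-l+1\}\,\frac{(l+1)^{3/2}}{(j+1)^{1/2}(l+2)^{1/2}}\,\Big(\frac{(j-l)!\, l!}{j!}\Big)^{1/2} \le C$. -/

import Mathlib

private lemma rpow_half_sq {x : ℝ} (hx : 0 ≤ x) : (x ^ ((1:ℝ)/2))^2 = x := by
  rw [← Real.rpow_natCast (x ^ ((1:ℝ)/2)) 2, ← Real.rpow_mul hx]
  norm_num

private lemma rpow_three_half_sq {x : ℝ} (hx : 0 ≤ x) : (x ^ ((3:ℝ)/2))^2 = x ^ 3 := by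
  rw [← Real.rpow_natCast (x ^ ((3:ℝ)/2)) 2, ← Real.rpow_mul hx, ← Real.rpow_natCast x 3]
  norm_num

private lemma cube_le_two_pow (n : ℕ) : (n+1)^3 ≤ 27 * 2^n := by
  have h1 : n/3 + 1 ≤ 2^(n/3) := Nat.lt_two_pow_self
  have h2 : n + 1 ≤ 3*(n/3+1) := by omega
  calc (n+1)^3 ≤ (3*(n/3+1))^3 := Nat.pow_le_pow_left h2 3
    _ = 27 * (n/3+1)^3 := by ring
    _ ≤ 27 * (2^(n/3))^3 := by gcongr
    _ = 27 * 2^(3*(n/3)) := by rw [Nat.mul_comm 3 (n/3), ← pow_mul]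
    _ ≤ 27 * 2^n := by gcongr <;> omega

private lemma choose_lower : ∀ s t : ℕ, 1 ≤ s → s ≤ t → (t+1) * 2^(s-1) ≤ (s + t).choose s := by
  intro s
  induction s with
  | zero => intro t h; omega
  | succ s ih =>
    intro t _ hst
    rcases Nat.eq_zero_or_pos s with rfl | hs
    · simp [Nat.choose_one_right, Nat.add_comm]
    · have hst' : s ≤ t := by omega
      have key := Nat.add_one_mul_choose_eq (s + t) s
      -- (s+t+1) * (s+t).choose s = (s+t+1).choose (s+1) * (s+1)
      have h1 : (t+1) * 2^s * (s+1) ≤ (s + 1 + t).choose (s+1) * (s+1) := by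
        have hIH := ih t hs hst'
        have h2 : 2 * (s+1) ≤ s + t + 1 := by omega
        calc (t+1) * 2^s * (s+1) = (t+1) * 2^(s-1) * (2 * (s+1)) := by
              rw [show 2^s = 2^(s-1) * 2 by rw [← pow_succ]; congr 1; omega]; ring
          _ ≤ (s+t).choose s * (s + t + 1) := Nat.mul_le_mul hIH h2
          _ = (s + t + 1) * (s+t).choose s := by ring
          _ = (s + 1 + t).choose (s+1) * (s+1) := by
              rw [show s + 1 + t = (s + t) + 1 by omega]
              exact key
      exact Nat.le_of_mul_le_mul_right h1 (by omega)

private lemma frac_combine (P c D Q R : ℝ) (hD : D ≠ 0) (hR : R ≠ 0) :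
    P * (c / D) * (Q / R) = (P * c * Q) / (D * R) := by
  field_simp

private lemma keyNat (l m : ℕ) (hm : 1 ≤ m) :
    (m+1) * (min (l+1) (m+1))^2 * (l+1)^3 * (Nat.factorial m * Nat.factorial l) ≤
      100 * ((l+m+1) * (l+2)) * Nat.factorial (l+m) := by
  have hfact : (l+m).choose l * Nat.factorial l * Nat.factorial m = Nat.factorial (l+m) := by
    have := Nat.choose_mul_factorial_mul_factorial (Nat.le_add_right l m)
    simpa [Nat.add_sub_cancel_left] using this
  set C := (l+m).choose l with hC
  suffices h : (m+1) * (min (l+1) (m+1))^2 * (l+1)^3 ≤ 100 * ((l+m+1) * (l+2)) * C by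
    calc (m+1) * (min (l+1) (m+1))^2 * (l+1)^3 * (Nat.factorial m * Nat.factorial l)
        ≤ (100 * ((l+m+1) * (l+2)) * C) * (Nat.factorial m * Nat.factorial l) :=
          Nat.mul_le_mul_right _ h
      _ = 100 * ((l+m+1) * (l+2)) * (C * Nat.factorial l * Nat.factorial m) := by ring
      _ = 100 * ((l+m+1) * (l+2)) * Nat.factorial (l+m) := by rw [hfact]
  rcases le_or_gt l m with hlm | hlm
  · -- l ≤ m, min = l + 1
    rw [min_eq_left (by omega)]
    rcases Nat.eq_zero_or_pos l with rfl | hl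
    · have hCpos : 1 ≤ C := Nat.choose_pos (Nat.le_add_right 0 m)
      simp only [Nat.zero_add]
      nlinarith
    · have hCb : (m+1) * 2^(l-1) ≤ C := choose_lower l m hl hlm
      have h27 : (l+1)^3 ≤ 27 * 2^l := cube_le_two_pow l
      have h2l : 2^l = 2 * 2^(l-1) := by
        rw [← pow_succ']; congr 1; omega
      calc (m+1) * (l+1)^2 * (l+1)^3 ≤ (m+1) * (l+1)^2 * (54 * 2^(l-1)) := by
            gcongr
            calc (l+1)^3 ≤ 27 * 2^l := h27
              _ = 54 * 2^(l-1) := by rw [h2l]; ring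
        _ = (54 * (l+1)^2) * ((m+1) * 2^(l-1)) := by ring
        _ ≤ (100 * ((l+m+1) * (l+2))) * ((m+1) * 2^(l-1)) := by
            apply Nat.mul_le_mul_right
            nlinarith
        _ ≤ (100 * ((l+m+1) * (l+2))) * C := Nat.mul_le_mul_left _ hCb
        _ = 100 * ((l+m+1) * (l+2)) * C := by ring
  · -- m < l, min = m + 1
    rw [min_eq_right (by omega)]
    have hCsymm : C = (m + l).choose m := by
      rw [hC, show l + m = m + l by ring]
      rw [← Nat.choose_symm (Nat.le_add_left l m)]
      congr 1
      omega
    have hCb : (l+1) * 2^(m-1) ≤ C := by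
      rw [hCsymm]; exact choose_lower m l hm (by omega)
    have h27 : (m+1)^3 ≤ 27 * 2^m := cube_le_two_pow m
    have h2m : 2^m = 2 * 2^(m-1) := by
      rw [← pow_succ']; congr 1; omega
    calc (m+1) * (m+1)^2 * (l+1)^3 = (m+1)^3 * (l+1)^3 := by ring
      _ ≤ (54 * 2^(m-1)) * (l+1)^3 := by
          gcongr
          calc (m+1)^3 ≤ 27 * 2^m := h27
            _ = 54 * 2^(m-1) := by rw [h2m]; ring
      _ = (54 * (l+1)^2) * ((l+1) * 2^(m-1)) := by ring
      _ ≤ (100 * ((l+m+1) * (l+2))) * ((l+1) * 2^(m-1)) := by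
          apply Nat.mul_le_mul_right
          nlinarith
      _ ≤ (100 * ((l+m+1) * (l+2))) * C := Nat.mul_le_mul_left _ hCb
      _ = 100 * ((l+m+1) * (l+2)) * C := by ring

theorem gevrey_convolution_coefficient_bounded :
    ∃ C : ℝ, 0 < C ∧ ∀ j l : ℕ, 1 ≤ j → l ≤ j - 1 →
      (((j - l + 1 : ℕ) : ℝ)) ^ ((1 : ℝ) / 2) *
        ((min (l + 1) (j - l + 1) : ℕ) : ℝ) *
        (((l : ℝ) + 1) ^ ((3 : ℝ) / 2) /
          (((j : ℝ) + 1) ^ ((1 : ℝ) / 2) * ((l : ℝ) + 2) ^ ((1 : ℝ) / 2))) *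
        ((((Nat.factorial (j - l) : ℝ) * (Nat.factorial l : ℝ)) / (Nat.factorial j : ℝ))
          ^ ((1 : ℝ) / 2))
        ≤ C := by
  refine ⟨10, by norm_num, ?_⟩
  intro j l hj hl
  obtain ⟨m, rfl⟩ : ∃ m, j = l + m := ⟨j - l, by omega⟩
  have hm : 1 ≤ m := by omega
  simp only [Nat.add_sub_cancel_left]
  set X := (((m + 1 : ℕ) : ℝ)) ^ ((1 : ℝ) / 2) *
        ((min (l + 1) (m + 1) : ℕ) : ℝ) *
        (((l : ℝ) + 1) ^ ((3 : ℝ) / 2) /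
          ((((l+m : ℕ) : ℝ) + 1) ^ ((1 : ℝ) / 2) * ((l : ℝ) + 2) ^ ((1 : ℝ) / 2))) *
        ((((Nat.factorial m : ℝ)) * (Nat.factorial l : ℝ)) / (Nat.factorial (l+m) : ℝ))
          ^ ((1 : ℝ) / 2) with hX
  show X ≤ 10
  have hfq : (0:ℝ) ≤ ((Nat.factorial m : ℝ)) * (Nat.factorial l : ℝ) / (Nat.factorial (l+m) : ℝ) :=
    by positivity
  have hXnn : 0 ≤ X := by
    rw [hX]; positivity
  have hX2 : X^2 ≤ 100 := by
    have e1 : ((((m + 1 : ℕ) : ℝ)) ^ ((1 : ℝ) / 2))^2 = ((m + 1 : ℕ) : ℝ) :=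
      rpow_half_sq (by positivity)
    have e2 : ((((l : ℝ) + 1)) ^ ((3 : ℝ) / 2))^2 = ((l : ℝ) + 1)^3 :=
      rpow_three_half_sq (by positivity)
    have e3 : (((((l+m : ℕ) : ℝ) + 1)) ^ ((1 : ℝ) / 2))^2 = (((l+m : ℕ) : ℝ) + 1) :=
      rpow_half_sq (by positivity)
    have e4 : ((((l : ℝ) + 2)) ^ ((1 : ℝ) / 2))^2 = ((l : ℝ) + 2) :=
      rpow_half_sq (by positivity)
    have e5 : (((((Nat.factorial m : ℝ)) * (Nat.factorial l : ℝ)) / (Nat.factorial (l+m) : ℝ))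
          ^ ((1 : ℝ) / 2))^2 = ((Nat.factorial m : ℝ)) * (Nat.factorial l : ℝ) / (Nat.factorial (l+m) : ℝ) :=
      rpow_half_sq hfq
    have hXsq : X^2 = ((m + 1 : ℕ) : ℝ) * (((min (l + 1) (m + 1) : ℕ) : ℝ))^2 *
        (((l : ℝ) + 1)^3 / ((((l+m : ℕ) : ℝ) + 1) * ((l : ℝ) + 2))) *
        (((Nat.factorial m : ℝ)) * (Nat.factorial l : ℝ) / (Nat.factorial (l+m) : ℝ)) := by
      rw [hX]
      calc (((m + 1 : ℕ) : ℝ) ^ ((1:ℝ)/2) * ((min (l + 1) (m + 1) : ℕ) : ℝ) *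
            (((l : ℝ) + 1) ^ ((3:ℝ)/2) /
              ((((l+m : ℕ) : ℝ) + 1) ^ ((1:ℝ)/2) * ((l : ℝ) + 2) ^ ((1:ℝ)/2))) *
            (((Nat.factorial m : ℝ)) * (Nat.factorial l : ℝ) / (Nat.factorial (l+m) : ℝ))
              ^ ((1:ℝ)/2))^2
          = ((((m + 1 : ℕ) : ℝ)) ^ ((1:ℝ)/2))^2 * (((min (l + 1) (m + 1) : ℕ) : ℝ))^2 *
            (((((l : ℝ) + 1)) ^ ((3:ℝ)/2))^2 /
              ((((((l+m : ℕ) : ℝ) + 1)) ^ ((1:ℝ)/2))^2 * ((((l : ℝ) + 2)) ^ ((1:ℝ)/2))^2)) *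
            ((((((Nat.factorial m : ℝ)) * (Nat.factorial l : ℝ)) / (Nat.factorial (l+m) : ℝ))
              ^ ((1:ℝ)/2))^2) := by ring
        _ = ((m + 1 : ℕ) : ℝ) * (((min (l + 1) (m + 1) : ℕ) : ℝ))^2 *
            (((l : ℝ) + 1)^3 / ((((l+m : ℕ) : ℝ) + 1) * ((l : ℝ) + 2))) *
            (((Nat.factorial m : ℝ)) * (Nat.factorial l : ℝ) / (Nat.factorial (l+m) : ℝ)) := by
              rw [e1, e2, e3, e4, e5]
    rw [hXsq, frac_combine _ _ _ _ _ (by positivity) (by positivity)]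
    rw [div_le_iff₀ (by positivity)]
    have hkey := keyNat l m hm
    have hkey' : (((m+1) * (min (l+1) (m+1))^2 * (l+1)^3 * (Nat.factorial m * Nat.factorial l) : ℕ) : ℝ) ≤
        ((100 * ((l+m+1) * (l+2)) * Nat.factorial (l+m) : ℕ) : ℝ) := Nat.cast_le.mpr hkey
    push_cast at hkey' ⊢
    nlinarith [hkey']
  nlinarith [hX2, hXnn]
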